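/- Let G = (V,E) be a finite directed acyclic graph, and let v ∈ V be a vertex of indegree exactly 1 with unique in-neighbor u (so u ≠ v). Suppose there is no vertex w with both (u,w) ∈ E and (v,w) ∈ E. Let G' be the directed graph on vertex set V \ {v} whose edge set consists of all edges of E not incident to v, together with an edge (u,w) for every edge (v,w) ∈ E. Then G is singly-connected if and only if G' is singly-connected. -/

import Mathlib

/-- A simple (directed) path from `v` to `w` in the directed graph with edge relation `E`:
a nonempty list of pairwise distinct vertices starting at `v`, ending at `w`,
with consecutive vertices joined by edges. -/
def IsSimplePath {V : Type*} (E : V → V → Prop) (v w : V) (p : List V) : Prop :=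
  p.Chain' E ∧ p.head? = some v ∧ p.getLast? = some w ∧ p.Nodup

/-- A directed graph is singly-connected if for every pair of vertices there is
at most one simple path between them. -/
def SinglyConnected {V : Type*} (E : V → V → Prop) : Prop :=
  ∀ v w : V, ∀ p q : List V, IsSimplePath E v w p → IsSimplePath E v w q → p = q

/-- A directed graph is acyclic if it has no directed cycle. -/
def DAcyclic {V : Type*} (E : V → V → Prop) : Prop :=
  ∀ v : V, ¬ Relation.TransGen E v v

namespace SCContractAux

open List

variable {V : Type*}

lemma chain'_transGen {E : V → V → Prop} :
    ∀ {l : List V} {x y : V}, List.Chain' E (x :: l) → y ∈ l → Relation.TransGen E x y := by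
  intro l
  induction l with
  | nil => intro x y _ hy; simp at hy
  | cons a l ih =>
    intro x y hc hy
    rw [List.Chain', List.isChain_cons_cons] at hc
    rcases List.mem_cons.mp hy with rfl | hy
    · exact Relation.TransGen.single hc.1
    · exact Relation.TransGen.head hc.1 (ih hc.2 hy)

lemma nodup_append_cons_inj : ∀ {s₁ s₂ t₁ t₂ : List V} {a : V},
    s₁ ++ a :: t₁ = s₂ ++ a :: t₂ → (s₁ ++ a :: t₁).Nodup → s₁ = s₂ ∧ t₁ = t₂ := by
  intro s₁
  induction s₁ with
  | nil =>
    intro s₂ t₁ t₂ a h hn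
    cases s₂ with
    | nil => simpa using h
    | cons x s₂ =>
      simp only [nil_append, cons_append, List.cons.injEq] at h
      obtain ⟨rfl, h2⟩ := h
      have hmem : a ∈ t₁ := by rw [h2]; exact mem_append_right _ (mem_cons_self)
      rcases nodup_cons.mp (by simpa using hn) with ⟨hna, -⟩
      exact (hna hmem).elim
  | cons x s₁ ih =>
    intro s₂ t₁ t₂ a h hn
    cases s₂ with
    | nil =>
      simp only [cons_append, nil_append, List.cons.injEq] at h
      obtain ⟨rfl, h2⟩ := h
      have hmem : x ∈ s₁ ++ x :: t₁ := mem_append_right _ (mem_cons_self)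
      rcases nodup_cons.mp (by simpa using hn) with ⟨hna, -⟩
      exact (hna hmem).elim
    | cons y s₂ =>
      simp only [cons_append, List.cons.injEq] at h
      obtain ⟨rfl, h2⟩ := h
      obtain ⟨h3, h4⟩ := ih h2 (nodup_cons.mp (by simpa using hn)).2
      exact ⟨by rw [h3], h4⟩

variable (E : V → V → Prop) (u v : V)

open scoped Classical in
noncomputable def expand : List V → List V
  | [] => []
  | [a] => [a]
  | a :: b :: t => (if a = u ∧ E v b then [a, v] else [a]) ++ expand (b :: t)

lemma expand_head? : ∀ p : List V, (expand E u v p).head? = p.head?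
  | [] => by simp [expand]
  | [a] => by simp [expand]
  | a :: b :: t => by
    rw [expand]
    split_ifs <;> simp

lemma expand_ne_nil : ∀ p : List V, p ≠ [] → expand E u v p ≠ []
  | p, hp, h => by
    have := expand_head? E u v p
    rw [h] at this
    cases p with
    | nil => exact hp rfl
    | cons a t => simp at this

lemma expand_getLast? : ∀ p : List V, (expand E u v p).getLast? = p.getLast?
  | [] => by simp [expand]
  | [a] => by simp [expand]
  | a :: b :: t => by
    have ih := expand_getLast? (b :: t)
    have hne : expand E u v (b :: t) ≠ [] := expand_ne_nil E u v _ (by simp)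
    rw [expand, getLast?_append, getLast?_cons_cons, ← ih]
    cases hgl : (expand E u v (b :: t)).getLast? with
    | none => exact absurd (getLast?_eq_none_iff.mp hgl) hne
    | some y => simp

lemma expand_mem : ∀ p : List V, ∀ x ∈ expand E u v p, x ∈ p ∨ x = v
  | [] => by simp [expand]
  | [a] => by simp [expand]
  | a :: b :: t => by
    intro x hx
    rw [expand] at hx
    rcases mem_append.mp hx with h | h
    · split_ifs at h with hcond
      · rcases mem_cons.mp h with rfl | h
        · exact Or.inl (mem_cons_self)
        · simp at h; exact Or.inr h
      · simp at h; subst h; exact Or.inl (mem_cons_self)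
    · rcases expand_mem (b :: t) x h with h | h
      · exact Or.inl (mem_cons_of_mem _ h)
      · exact Or.inr h

lemma expand_eq_of_not_mem : ∀ p : List V, u ∉ p → expand E u v p = p
  | [] => by simp [expand]
  | [a] => by simp [expand]
  | a :: b :: t => by
    intro hu
    rw [expand, if_neg, expand_eq_of_not_mem (b :: t) (fun h => hu (mem_cons_of_mem _ h))]
    · simp
    · rintro ⟨rfl, -⟩; exact hu (mem_cons_self)

lemma expand_filter [DecidableEq V] :
    ∀ p : List V, v ∉ p → (expand E u v p).filter (fun x => x ≠ v) = p
  | [] => by simp [expand]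
  | [a] => by
    intro hv
    have ha : a ≠ v := fun h => hv (by simp [h])
    simp [expand, ha]
  | a :: b :: t => by
    intro hv
    have ha : a ≠ v := fun h => hv (h ▸ mem_cons_self)
    have hv' : v ∉ b :: t := fun h => hv (mem_cons_of_mem _ h)
    rw [expand, filter_append, expand_filter (b :: t) hv']
    split_ifs <;> simp [ha]

lemma expand_nodup : ∀ p : List V, p.Nodup → v ∉ p → u ≠ v → (expand E u v p).Nodup
  | [] => by simp [expand]
  | [a] => by simp [expand]
  | a :: b :: t => by
    intro hn hv huv
    have hv' : v ∉ b :: t := fun h => hv (mem_cons_of_mem _ h)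
    rw [expand]; split_ifs with h
    · obtain ⟨rfl, -⟩ := h
      rw [expand_eq_of_not_mem E a v (b :: t) (nodup_cons.mp hn).1]
      simp only [cons_append, singleton_append]
      refine nodup_cons.mpr ⟨?_, nodup_cons.mpr ⟨hv', (nodup_cons.mp hn).2⟩⟩
      simp only [mem_cons, not_or]
      exact ⟨huv, (nodup_cons.mp hn).1⟩
    · simp only [singleton_append]
      refine nodup_cons.mpr ⟨?_, expand_nodup (b :: t) (nodup_cons.mp hn).2 hv' huv⟩
      intro hmem
      rcases expand_mem E u v (b :: t) a hmem with hh | rfl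
      · exact (nodup_cons.mp hn).1 hh
      · exact hv (mem_cons_self)

lemma expand_chain' (hin : E u v) :
    ∀ p : List V, Chain' (fun a b => E a b ∨ (a = u ∧ E v b)) p → Chain' E (expand E u v p)
  | [] => by simp [expand, List.Chain', isChain_nil]
  | [a] => by simp [expand, List.Chain', isChain_singleton]
  | a :: b :: t => by
    intro hc
    rw [List.Chain', isChain_cons_cons] at hc
    have ih := expand_chain' hin (b :: t) hc.2
    have hhd : (expand E u v (b :: t)).head? = some b := by
      rw [expand_head?]; rfl
    rw [expand]; split_ifs with h
    · obtain ⟨rfl, hvb⟩ := h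
      simp only [cons_append, nil_append]
      refine isChain_cons.mpr ⟨?_, isChain_cons.mpr ⟨?_, ih⟩⟩
      · intro y hy; simp at hy; subst hy; exact hin
      · intro y hy; rw [hhd] at hy; simp at hy; subst hy; exact hvb
    · have hab : E a b := hc.1.resolve_right h
      simp only [singleton_append]
      refine isChain_cons.mpr ⟨?_, ih⟩
      intro y hy; rw [hhd] at hy; simp at hy; subst hy; exact hab

noncomputable def contract [DecidableEq V] (p : List V) : List V :=
  if p.head? = some v then u :: p.tail else p.erase v

variable {E u v}

lemma contract_erase [DecidableEq V] {a : V} {p : List V} (hhd : p.head? = some a)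
    (hav : a ≠ v) : contract u v p = p.erase v := by
  rw [contract, if_neg]
  rw [hhd]
  simp [hav]

lemma decomp [DecidableEq V] (huniq : ∀ x : V, E x v → x = u) {a b : V} {p : List V}
    (hp : IsSimplePath E a b p) (hav : a ≠ v) (hv : v ∈ p) :
    ∃ s t, p = s ++ u :: v :: t ∧ contract u v p = s ++ u :: t ∧ (s ++ u :: t).Nodup := by
  obtain ⟨hc, hhd, hlast, hnd⟩ := hp
  obtain ⟨s', t, hpe⟩ := append_of_mem hv
  have hnd' := hnd; rw [hpe] at hnd'
  have hvs : v ∉ s' := by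
    rcases nodup_append.mp hnd' with ⟨-, -, hdis⟩
    exact fun hh => hdis _ hh _ mem_cons_self rfl
  have hsne : s' ≠ [] := by
    rintro rfl
    rw [hpe] at hhd; simp at hhd
    exact hav hhd.symm
  have hjun : E (s'.getLast hsne) v := by
    have hc' := hc; rw [hpe] at hc'
    have := (isChain_append.mp hc').2.2
    exact this _ (getLast_mem_getLast? hsne) v rfl
  have hgl : s'.getLast hsne = u := huniq _ hjun
  have hsplit : s' = s'.dropLast ++ [u] := by
    conv_lhs => rw [← dropLast_append_getLast hsne, hgl]
  refine ⟨s'.dropLast, t, ?_, ?_, ?_⟩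
  · rw [hpe]; conv_lhs => rw [hsplit]
    simp
  · rw [contract_erase hhd hav, hpe, erase_append_right _ hvs, erase_cons_head]
    conv_lhs => rw [hsplit]
    simp
  · have hsub : s' ++ t <+ s' ++ v :: t := (sublist_cons_self v t).append_left s'
    have : (s' ++ t).Nodup := hnd'.sublist hsub
    rw [hsplit] at this; simpa using this

lemma no_mixed [DecidableEq V] (huniq : ∀ x : V, E x v → x = u)
    (hno : ¬ ∃ w : V, E u w ∧ E v w) {a b : V} {p q : List V}
    (hp : IsSimplePath E a b p) (hq : IsSimplePath E a b q) (hav : a ≠ v)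
    (hvp : v ∈ p) (hvq : v ∉ q) (h : contract u v p = contract u v q) : False := by
  obtain ⟨sp, tp, hpe, hcp, -⟩ := decomp huniq hp hav hvp
  have hcq : contract u v q = q := by
    rw [contract_erase hq.2.1 hav, erase_of_not_mem hvq]
  rw [hcp, hcq] at h
  have hb : b ∈ q := mem_of_getLast? hq.2.2.1
  have hbv : b ≠ v := fun hh => hvq (hh ▸ hb)
  cases tp with
  | nil =>
    have hl := hp.2.2.1
    rw [hpe, getLast?_append] at hl
    simp at hl
    exact hbv hl.symm
  | cons w tp₂ =>
    have hcp' := hp.1; rw [hpe] at hcp'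
    have h1 : E v w := (isChain_cons_cons.mp (isChain_cons_cons.mp (isChain_append.mp hcp').2.1).2).1
    have hcq' := hq.1; rw [← h] at hcq'
    have h2 : E u w := (isChain_cons_cons.mp (isChain_append.mp hcq').2.1).1
    exact hno ⟨w, h2, h1⟩

lemma contract_inj [DecidableEq V] (hacyc : DAcyclic E) (huniq : ∀ x : V, E x v → x = u)
    (hno : ¬ ∃ w : V, E u w ∧ E v w) {a b : V} {p q : List V}
    (hp : IsSimplePath E a b p) (hq : IsSimplePath E a b q)
    (h : contract u v p = contract u v q) : p = q := by
  by_cases hav : a = v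
  · cases p with
    | nil => exact absurd hp.2.1 (by simp)
    | cons x tp =>
      cases q with
      | nil => exact absurd hq.2.1 (by simp)
      | cons y tq =>
        have hx : x = v := by
          have := hp.2.1; rw [head?_cons, Option.some.injEq] at this; rw [this, hav]
        have hy : y = v := by
          have := hq.2.1; rw [head?_cons, Option.some.injEq] at this; rw [this, hav]
        rw [show contract u v (x :: tp) = u :: tp from by simp [contract, hx],
          show contract u v (y :: tq) = u :: tq from by simp [contract, hy]] at h
        simp only [List.cons.injEq] at h
        rw [hx, hy, h.2]
  · by_cases hvp : v ∈ p <;> by_cases hvq : v ∈ q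
    · obtain ⟨sp, tp, hpe, hcp, hnd⟩ := decomp huniq hp hav hvp
      obtain ⟨sq, tq, hqe, hcq, -⟩ := decomp huniq hq hav hvq
      rw [hcp, hcq] at h
      obtain ⟨h1, h2⟩ := nodup_append_cons_inj h hnd
      rw [hpe, hqe, h1, h2]
    · exact (no_mixed huniq hno hp hq hav hvp hvq h).elim
    · exact (no_mixed huniq hno hq hp hav hvq hvp h.symm).elim
    · rw [contract_erase hp.2.1 hav, erase_of_not_mem hvp,
        contract_erase hq.2.1 hav, erase_of_not_mem hvq] at h
      exact h

lemma contract_spec [DecidableEq V] (hacyc : DAcyclic E) (huv : u ≠ v) (hin : E u v)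
    (huniq : ∀ x : V, E x v → x = u) {a b : V} {p : List V} (hp : IsSimplePath E a b p) :
    Chain' (fun a b => E a b ∨ (a = u ∧ E v b)) (contract u v p) ∧
      v ∉ contract u v p ∧
      (contract u v p).head? = some (if a = v then u else a) ∧
      (contract u v p).getLast? = some (if b = v then u else b) ∧
      (contract u v p).Nodup := by
  obtain ⟨hc, hhd, hlast, hnd⟩ := hp
  by_cases hav : a = v
  · cases p with
    | nil => simp at hhd
    | cons x t =>
      have hx : x = a := by simpa using hhd
      subst hx
      subst hav
      have hcon : contract u x (x :: t) = u :: t := by simp [contract]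
      have hvt : x ∉ t := (nodup_cons.mp hnd).1
      have hut : u ∉ t := fun hh => hacyc x ((chain'_transGen hc hh).tail hin)
      rw [hcon]
      refine ⟨?_, ?_, ?_, ?_, ?_⟩
      · refine isChain_cons.mpr ⟨?_, ((isChain_cons.mp hc).2).imp fun a b h => Or.inl h⟩
        intro y hy
        exact Or.inr ⟨rfl, (isChain_cons.mp hc).1 y hy⟩
      · simp only [mem_cons, not_or]
        exact ⟨Ne.symm huv, hvt⟩
      · simp
      · cases t with
        | nil =>
          have hb : b = x := (show x = b by simpa using hlast).symm
          simp [hb]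
        | cons c t' =>
          have hbl : (c :: t').getLast? = some b := by
            rw [getLast?_cons_cons] at hlast; exact hlast
          have hbv : b ≠ x := by
            intro hh
            exact hvt (hh ▸ mem_of_getLast? hbl)
          rw [getLast?_cons_cons, hbl, if_neg hbv]
      · exact nodup_cons.mpr ⟨hut, (nodup_cons.mp hnd).2⟩
  · by_cases hv : v ∈ p
    · obtain ⟨s, t, hpe, hcp, hndc⟩ := decomp huniq ⟨hc, hhd, hlast, hnd⟩ hav hv
      rw [hcp]
      have hnd' := hnd; rw [hpe] at hnd'
      have hvs : v ∉ s ++ u :: t := by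
        intro hh
        rcases mem_append.mp hh with hh | hh
        · rcases nodup_append.mp hnd' with ⟨-, -, hdis⟩
          exact hdis _ hh _ (mem_cons_of_mem _ mem_cons_self) rfl
        · have h2 := (nodup_append.mp hnd').2.1
          rcases mem_cons.mp hh with hh | hh
          · exact huv hh.symm
          · rcases nodup_cons.mp h2 with ⟨-, h3⟩
            exact (nodup_cons.mp h3).1 hh
      have hc' := hc; rw [hpe] at hc'
      rcases isChain_append.mp hc' with ⟨hc1, hc2, hc3⟩
      rcases isChain_cons_cons.mp hc2 with ⟨-, hc4⟩
      rcases isChain_cons.mp hc4 with ⟨hc5, hc6⟩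
      refine ⟨?_, hvs, ?_, ?_, hndc⟩
      · refine isChain_append.mpr ⟨hc1.imp fun a b h => Or.inl h, ?_, ?_⟩
        · refine isChain_cons.mpr ⟨?_, hc6.imp fun a b h => Or.inl h⟩
          intro y hy
          exact Or.inr ⟨rfl, hc5 y hy⟩
        · intro x hx y hy
          simp only [head?_cons, Option.mem_some_iff] at hy
          subst hy
          exact Or.inl (hc3 x hx u rfl)
      · have hh := hhd; rw [hpe, head?_append] at hh
        rw [head?_append, if_neg hav]
        simpa using hh
      · cases t with
        | nil =>
          have hb : b = v := by
            have hl := hlast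
            rw [hpe, getLast?_append, getLast?_cons_cons] at hl
            simpa using hl.symm
          rw [getLast?_append]
          simp [hb]
        | cons c t' =>
          have hbl : (c :: t').getLast? = some b := by
            have hl := hlast
            rw [hpe, getLast?_append, getLast?_cons_cons, getLast?_cons_cons] at hl
            have hy := getLast?_eq_getLast (l := c :: t') (by simp)
            rw [hy] at hl ⊢
            simpa using hl
          have hbv : b ≠ v := by
            intro hh
            apply hvs
            rw [hh] at hbl
            exact mem_append_right _ (mem_cons_of_mem _ (mem_of_getLast? hbl))
          rw [getLast?_append, getLast?_cons_cons, hbl, if_neg hbv]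
          rfl
    · have hcon : contract u v p = p := by
        rw [contract_erase hhd hav, erase_of_not_mem hv]
      rw [hcon]
      have hbv : b ≠ v := fun hh => hv (hh ▸ mem_of_getLast? hlast)
      exact ⟨hc.imp fun a b h => Or.inl h, hv, by rw [hhd, if_neg hav],
        by rw [hlast, if_neg hbv], hnd⟩

lemma pmap_map_val {r : List V} {v : V} (hr : ∀ x ∈ r, x ≠ v) :
    (r.pmap (fun x h => (⟨x, h⟩ : {x : V // x ≠ v})) hr).map Subtype.val = r := by
  induction r with
  | nil => rfl
  | cons a t ih => simp [List.pmap, ih]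

lemma lift_isSimplePath {E : V → V → Prop} {u v : V} {r : List V} (hr : ∀ x ∈ r, x ≠ v)
    {A B : {x : V // x ≠ v}}
    (h1 : Chain' (fun a b => E a b ∨ (a = u ∧ E v b)) r) (h2 : r.head? = some A.1)
    (h3 : r.getLast? = some B.1) (h4 : r.Nodup) :
    IsSimplePath (fun a b : {x : V // x ≠ v} => E a.1 b.1 ∨ (a.1 = u ∧ E v b.1)) A B
      (r.pmap (fun x h => ⟨x, h⟩) hr) := by
  have hmap := pmap_map_val hr
  refine ⟨?_, ?_, ?_, ?_⟩
  · rw [← hmap] at h1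
    exact (List.isChain_map _).mp h1
  · rw [← hmap, head?_map] at h2
    cases hh : (r.pmap (fun x h => (⟨x, h⟩ : {x : V // x ≠ v})) hr).head? with
    | none => rw [hh] at h2; simp at h2
    | some y =>
      rw [hh] at h2
      simp only [Option.map_some, Option.some.injEq] at h2
      rw [Subtype.ext h2]
  · rw [← hmap, getLast?_map] at h3
    cases hh : (r.pmap (fun x h => (⟨x, h⟩ : {x : V // x ≠ v})) hr).getLast? with
    | none => rw [hh] at h3; simp at h3
    | some y =>
      rw [hh] at h3
      simp only [Option.map_some, Option.some.injEq] at h3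
      rw [Subtype.ext h3]
  · rw [← hmap] at h4
    exact h4.of_map Subtype.val

end SCContractAux

open SCContractAux List in
/- main theorem -/
theorem singlyConnected_iff_contract_indegree_one {V : Type*} [Finite V]
    (E : V → V → Prop) (hacyc : DAcyclic E) (u v : V) (huv : u ≠ v)
    (hin : E u v) (huniq : ∀ x : V, E x v → x = u)
    (hno : ¬ ∃ w : V, E u w ∧ E v w) :
    SinglyConnected E ↔
      SinglyConnected (fun a b : {x : V // x ≠ v} => E a.1 b.1 ∨ (a.1 = u ∧ E v b.1)) := by
  classical
  constructor
  · intro hE A B P Q hP hQ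
    have mk : ∀ R : List {x : V // x ≠ v},
        IsSimplePath (fun a b : {x : V // x ≠ v} => E a.1 b.1 ∨ (a.1 = u ∧ E v b.1)) A B R →
        IsSimplePath E A.1 B.1 (expand E u v (R.map Subtype.val)) ∧
          v ∉ R.map Subtype.val := by
      intro R hR
      obtain ⟨h1, h2, h3, h4⟩ := hR
      have hv : v ∉ R.map Subtype.val := by
        intro h
        rcases List.mem_map.mp h with ⟨y, -, hy⟩
        exact y.2 hy
      have hchain : Chain' (fun a b => E a b ∨ (a = u ∧ E v b)) (R.map Subtype.val) :=
        (List.isChain_map _).mpr h1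
      refine ⟨⟨expand_chain' E u v hin _ hchain, ?_, ?_,
        expand_nodup E u v _ (List.Nodup.map Subtype.val_injective h4) hv huv⟩, hv⟩
      · rw [expand_head?, head?_map, h2]; rfl
      · rw [expand_getLast?, getLast?_map, h3]; rfl
    have h1 := mk P hP
    have h2 := mk Q hQ
    have heq := hE A.1 B.1 _ _ h1.1 h2.1
    have hmq : P.map Subtype.val = Q.map Subtype.val := by
      rw [← expand_filter E u v _ h1.2, ← expand_filter E u v _ h2.2, heq]
    exact List.map_injective_iff.mpr Subtype.val_injective hmq
  · intro hE' a b p q hp hq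
    obtain ⟨hc1, hm1, hh1, hl1, hn1⟩ := contract_spec hacyc huv hin huniq hp
    obtain ⟨hc2, hm2, hh2, hl2, hn2⟩ := contract_spec hacyc huv hin huniq hq
    set A : {x : V // x ≠ v} := if h : a = v then ⟨u, huv⟩ else ⟨a, h⟩ with hA
    set B : {x : V // x ≠ v} := if h : b = v then ⟨u, huv⟩ else ⟨b, h⟩ with hB
    have hA1 : A.1 = if a = v then u else a := by
      by_cases h : a = v <;> simp [hA, h]
    have hB1 : B.1 = if b = v then u else b := by
      by_cases h : b = v <;> simp [hB, h]
    have hvp : ∀ x ∈ contract u v p, x ≠ v := fun x hx h => hm1 (h ▸ hx)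
    have hvq : ∀ x ∈ contract u v q, x ≠ v := fun x hx h => hm2 (h ▸ hx)
    have Hp := lift_isSimplePath (u := u) hvp hc1 (by rw [hA1]; exact hh1)
      (by rw [hB1]; exact hl1) hn1
    have Hq := lift_isSimplePath (u := u) hvq hc2 (by rw [hA1]; exact hh2)
      (by rw [hB1]; exact hl2) hn2
    have heq := hE' A B _ _ Hp Hq
    have hcc : contract u v p = contract u v q := by
      have h' := congrArg (List.map Subtype.val) heq
      rwa [pmap_map_val, pmap_map_val] at h'
    exact contract_inj hacyc huniq hno hp hq hcc
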